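/- For the ordered star S on vertex set {1,2,3,4} with edges {1,4},{2,4},{3,4} (center last), the canonical Ramsey number satisfies ER(S) = 6; for the ordered star S' on {1,2,3,4} with edges {1,3},{2,3},{3,4} (center third), ER(S') = 5. In each case, every edge-coloring of the ordered complete graph on ER many vertices contains a canonically colored copy, and there exists an edge-coloring of the ordered complete graph on one vertex fewer with no canonically colored copy. -/
import Mathlib


/-- Given an ordered graph on `Fin m` whose edge list `E` consists of pairs `(a, b)` with
`a < b`, an order-preserving injection `f : Fin m → Fin n`, and an edge-coloring `χ` of the
ordered complete graph on `Fin n`, the copy of the graph given by `f` is *canonically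
colored* if it is monochromatic, rainbow, lower lexicographic (two edges of the copy get
the same color iff they have the same smaller endpoint), or upper lexicographic (two edges
of the copy get the same color iff they have the same larger endpoint). -/
def CanonicalCopy {m n : ℕ} (E : List (Fin m × Fin m)) (χ : Sym2 (Fin n) → ℕ)
    (f : Fin m → Fin n) : Prop :=
  (∀ e ∈ E, ∀ e' ∈ E, χ s(f e.1, f e.2) = χ s(f e'.1, f e'.2)) ∨
  (∀ e ∈ E, ∀ e' ∈ E, χ s(f e.1, f e.2) = χ s(f e'.1, f e'.2) → e = e') ∨
  (∀ e ∈ E, ∀ e' ∈ E, (χ s(f e.1, f e.2) = χ s(f e'.1, f e'.2) ↔ e.1 = e'.1)) ∨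
  (∀ e ∈ E, ∀ e' ∈ E, (χ s(f e.1, f e.2) = χ s(f e'.1, f e'.2) ↔ e.2 = e'.2))

/-- The edge-coloring `χ` of the ordered complete graph on `Fin n` contains a canonically
colored copy of the ordered graph on `Fin m` with edge list `E`: a copy is given by an
order-preserving (strictly monotone) injection `f : Fin m → Fin n`. -/
def HasCanonicalCopy {m : ℕ} (E : List (Fin m × Fin m)) (n : ℕ)
    (χ : Sym2 (Fin n) → ℕ) : Prop :=
  ∃ f : Fin m → Fin n, StrictMono f ∧ CanonicalCopy E χ f

/-- The ordered star on `{1,2,3,4}` with edges `{1,4},{2,4},{3,4}` (center last),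
0-indexed. -/
def starS : List (Fin 4 × Fin 4) := [(0, 3), (1, 3), (2, 3)]

/-- The ordered star on `{1,2,3,4}` with edges `{1,3},{2,3},{3,4}` (center third),
0-indexed. -/
def starS' : List (Fin 4 × Fin 4) := [(0, 2), (1, 2), (2, 3)]

def quad {n : ℕ} (a b c d : Fin n) : Fin 4 → Fin n :=
  fun t => match t with
  | ⟨0, _⟩ => a
  | ⟨1, _⟩ => b
  | ⟨2, _⟩ => c
  | ⟨3, _⟩ => d

@[simp] lemma quad_zero {n : ℕ} (a b c d : Fin n) : quad a b c d 0 = a := rfl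
@[simp] lemma quad_one {n : ℕ} (a b c d : Fin n) : quad a b c d 1 = b := rfl
@[simp] lemma quad_two {n : ℕ} (a b c d : Fin n) : quad a b c d 2 = c := rfl
@[simp] lemma quad_three {n : ℕ} (a b c d : Fin n) : quad a b c d 3 = d := rfl

lemma strictMono_quad {n : ℕ} {a b c d : Fin n} (h1 : a < b) (h2 : b < c) (h3 : c < d) :
    StrictMono (quad a b c d) := by
  intro x y h
  fin_cases x <;> fin_cases y <;>
    first
      | exact absurd h (by decide)
      | exact h1
      | exact h2
      | exact h3
      | exact h1.trans h2
      | exact h2.trans h3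
      | exact (h1.trans h2).trans h3

lemma five (c : Fin 5 → ℕ) : ∃ i j k : Fin 5, i < j ∧ j < k ∧
    ((c i = c j ∧ c i = c k) ∨ (c i ≠ c j ∧ c i ≠ c k ∧ c j ≠ c k)) := by
  rcases eq_or_ne (c 0) (c 1) with h01 | h01
  · rcases eq_or_ne (c 3) (c 0) with h30 | h30
    · exact ⟨0, 1, 3, by decide, by decide, Or.inl ⟨h01, h30.symm⟩⟩
    · rcases eq_or_ne (c 4) (c 0) with h40 | h40
      · exact ⟨0, 1, 4, by decide, by decide, Or.inl ⟨h01, h40.symm⟩⟩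
      · rcases eq_or_ne (c 4) (c 3) with h43 | h43
        · rcases eq_or_ne (c 2) (c 0) with h20 | h20
          · exact ⟨0, 1, 2, by decide, by decide, Or.inl ⟨h01, h20.symm⟩⟩
          · rcases eq_or_ne (c 2) (c 3) with h23 | h23
            · exact ⟨2, 3, 4, by decide, by decide, Or.inl ⟨h23, by omega⟩⟩
            · exact ⟨0, 2, 3, by decide, by decide, Or.inr ⟨by omega, by omega, by omega⟩⟩
        · exact ⟨0, 3, 4, by decide, by decide, Or.inr ⟨by omega, by omega, by omega⟩⟩
  · rcases eq_or_ne (c 0) (c 2) with h02 | h02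
    · rcases eq_or_ne (c 3) (c 0) with h30 | h30
      · exact ⟨0, 2, 3, by decide, by decide, Or.inl ⟨h02, h30.symm⟩⟩
      · rcases eq_or_ne (c 4) (c 0) with h40 | h40
        · exact ⟨0, 2, 4, by decide, by decide, Or.inl ⟨h02, h40.symm⟩⟩
        · rcases eq_or_ne (c 4) (c 3) with h43 | h43
          · rcases eq_or_ne (c 1) (c 3) with h13 | h13
            · exact ⟨1, 3, 4, by decide, by decide, Or.inl ⟨h13, by omega⟩⟩
            · exact ⟨0, 1, 3, by decide, by decide, Or.inr ⟨by omega, by omega, by omega⟩⟩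
          · exact ⟨0, 3, 4, by decide, by decide, Or.inr ⟨by omega, by omega, by omega⟩⟩
    · rcases eq_or_ne (c 1) (c 2) with h12 | h12
      · rcases eq_or_ne (c 3) (c 1) with h31 | h31
        · exact ⟨1, 2, 3, by decide, by decide, Or.inl ⟨h12, h31.symm⟩⟩
        · rcases eq_or_ne (c 4) (c 1) with h41 | h41
          · exact ⟨1, 2, 4, by decide, by decide, Or.inl ⟨h12, h41.symm⟩⟩
          · rcases eq_or_ne (c 4) (c 3) with h43 | h43
            · rcases eq_or_ne (c 0) (c 3) with h03 | h03
              · exact ⟨0, 3, 4, by decide, by decide, Or.inl ⟨h03, by omega⟩⟩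
              · exact ⟨0, 1, 3, by decide, by decide, Or.inr ⟨by omega, by omega, by omega⟩⟩
            · exact ⟨1, 3, 4, by decide, by decide, Or.inr ⟨by omega, by omega, by omega⟩⟩
      · exact ⟨0, 1, 2, by decide, by decide, Or.inr ⟨h01, h02, h12⟩⟩

lemma posS (χ : Sym2 (Fin 6) → ℕ) : HasCanonicalCopy starS 6 χ := by
  obtain ⟨i, j, k, hij, hjk, hc⟩ := five (fun i => χ s(i.castSucc, 5))
  simp only [ne_eq] at hc
  refine ⟨quad i.castSucc j.castSucc k.castSucc 5, strictMono_quad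
    (Fin.castSucc_lt_castSucc_iff.mpr hij) (Fin.castSucc_lt_castSucc_iff.mpr hjk)
    (Fin.castSucc_lt_last k), ?_⟩
  rcases hc with ⟨h1, h2⟩ | ⟨h1, h2, h3⟩
  · left
    intro e he e' he'
    fin_cases he <;> fin_cases he' <;> simp <;> omega
  · right; left
    intro e he e' he'
    fin_cases he <;> fin_cases he' <;> simp <;> omega

lemma posS' (χ : Sym2 (Fin 5) → ℕ) : HasCanonicalCopy starS' 5 χ := by
  rcases eq_or_ne (χ s(0, 3)) (χ s(1, 3)) with h01 | h01
  · refine ⟨quad 0 1 3 4, strictMono_quad (by decide) (by decide) (by decide), ?_⟩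
    rcases eq_or_ne (χ s(3, 4)) (χ s(0, 3)) with hz | hz
    · left
      intro e he e' he'
      fin_cases he <;> fin_cases he' <;> simp <;> omega
    · right; right; right
      intro e he e' he'
      fin_cases he <;> fin_cases he' <;> simp <;> omega
  · rcases eq_or_ne (χ s(0, 3)) (χ s(2, 3)) with h02 | h02
    · refine ⟨quad 0 2 3 4, strictMono_quad (by decide) (by decide) (by decide), ?_⟩
      rcases eq_or_ne (χ s(3, 4)) (χ s(0, 3)) with hz | hz
      · left
        intro e he e' he'
        fin_cases he <;> fin_cases he' <;> simp <;> omega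
      · right; right; right
        intro e he e' he'
        fin_cases he <;> fin_cases he' <;> simp <;> omega
    · rcases eq_or_ne (χ s(1, 3)) (χ s(2, 3)) with h12 | h12
      · refine ⟨quad 1 2 3 4, strictMono_quad (by decide) (by decide) (by decide), ?_⟩
        rcases eq_or_ne (χ s(3, 4)) (χ s(1, 3)) with hz | hz
        · left
          intro e he e' he'
          fin_cases he <;> fin_cases he' <;> simp <;> omega
        · right; right; right
          intro e he e' he'
          fin_cases he <;> fin_cases he' <;> simp <;> omega
      · rcases eq_or_ne (χ s(3, 4)) (χ s(0, 3)) with hz0 | hz0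
        · refine ⟨quad 1 2 3 4, strictMono_quad (by decide) (by decide) (by decide), ?_⟩
          right; left
          intro e he e' he'
          fin_cases he <;> fin_cases he' <;> simp <;> omega
        · rcases eq_or_ne (χ s(3, 4)) (χ s(1, 3)) with hz1 | hz1
          · refine ⟨quad 0 2 3 4, strictMono_quad (by decide) (by decide) (by decide), ?_⟩
            right; left
            intro e he e' he'
            fin_cases he <;> fin_cases he' <;> simp <;> omega
          · refine ⟨quad 0 1 3 4, strictMono_quad (by decide) (by decide) (by decide), ?_⟩
            right; left
            intro e he e' he'
            fin_cases he <;> fin_cases he' <;> simp <;> omega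

def chi5 : Sym2 (Fin 5) → ℕ :=
  Sym2.lift ⟨fun i j =>
    (fun a b : Fin 5 => if b.val = 3 then (if a.val ≤ 1 then 0 else 1)
      else if b.val = 4 then (if a.val ≤ 1 then 2 else 3) else 5) (min i j) (max i j),
    by intro a b; simp [min_comm, max_comm]⟩

set_option maxRecDepth 400000 in
set_option synthInstance.maxSize 4000 in
set_option synthInstance.maxHeartbeats 1000000 in
set_option maxHeartbeats 1000000 in
lemma negS : ¬ HasCanonicalCopy starS 5 chi5 := by
  unfold HasCanonicalCopy CanonicalCopy StrictMono starS chi5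
  decide

def chi4 : Sym2 (Fin 4) → ℕ :=
  Sym2.lift ⟨fun i j =>
    (fun a b : Fin 4 => if b.val = 2 then (if a.val = 0 then 0 else 1)
      else if b.val = 3 ∧ a.val = 2 then 0 else 7) (min i j) (max i j),
    by intro a b; simp [min_comm, max_comm]⟩

set_option maxRecDepth 400000 in
set_option synthInstance.maxSize 4000 in
set_option synthInstance.maxHeartbeats 1000000 in
set_option maxHeartbeats 1000000 in
lemma negS' : ¬ HasCanonicalCopy starS' 4 chi4 := by
  unfold HasCanonicalCopy CanonicalCopy StrictMono starS' chi4
  decide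

/-- ER(S) = 6 and ER(S') = 5. -/
theorem ER_ordered_stars :
    ((∀ χ : Sym2 (Fin 6) → ℕ, HasCanonicalCopy starS 6 χ) ∧
      (∃ χ : Sym2 (Fin 5) → ℕ, ¬ HasCanonicalCopy starS 5 χ)) ∧
    ((∀ χ : Sym2 (Fin 5) → ℕ, HasCanonicalCopy starS' 5 χ) ∧
      (∃ χ : Sym2 (Fin 4) → ℕ, ¬ HasCanonicalCopy starS' 4 χ)) :=
  ⟨⟨posS, ⟨chi5, negS⟩⟩, ⟨posS', ⟨chi4, negS'⟩⟩⟩
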